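/- (Jacobsthal) Fix an odd prime p and an integer a not divisible by p, and let F : ℤ/pℤ → ℂ be any function. Then ∑_{x ∈ (ℤ/pℤ)^×} F[x + a x^{-1}] = ∑_{x=0}^{p-1} F[x] + ∑_{x=0}^{p-1} χ(x² - 4a) F[x], where x^{-1} denotes the multiplicative inverse of x in ℤ/pℤ and x² - 4a is computed in ℤ/pℤ. -/

import Mathlib

open scoped BigOperators Classical

noncomputable section

/-- The Legendre symbol modulo `p`, viewed as a complex-valued function on `ZMod p`:
`1` on nonzero quadratic residues, `0` at `0`, `-1` on quadratic nonresidues. -/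
def chi (p : ℕ) (k : ZMod p) : ℂ :=
  if k = 0 then 0 else if ∃ m : ZMod p, m ^ 2 = k then 1 else -1

/-- The Legendre symbol modulo `p`, viewed as an integer-valued function on `ZMod p`. -/
def chiZ (p : ℕ) (k : ZMod p) : ℤ :=
  if k = 0 then 0 else if ∃ m : ZMod p, m ^ 2 = k then 1 else -1

/-- The discrete periodic (narrow band) ambiguity function
`A_p(u)[m,n] = (1/p) ∑_k u[k+m] conj(u[k]) e^{-2πi k n/p}`. -/
def ambig (p : ℕ) [NeZero p] (u : ZMod p → ℂ) (m n : ZMod p) : ℂ :=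
  (1 / (p : ℂ)) * ∑ k : ZMod p,
    u (k + m) * (starRingEnd ℂ) (u k) *
      Complex.exp (-2 * Real.pi * Complex.I * (k.val : ℂ) * (n.val : ℂ) / (p : ℂ))

/-- The Kloosterman sum `K[a,b;p] = ∑_{x ∈ (ℤ/pℤ)ˣ} e^{2πi(ax + b x⁻¹)/p}`. -/
def kloost (p : ℕ) [NeZero p] (a b : ℤ) : ℂ :=
  ∑ x : (ZMod p)ˣ,
    Complex.exp (2 * Real.pi * Complex.I *
      ((((a : ZMod p) * (x : ZMod p) + (b : ZMod p) * ((x⁻¹ : (ZMod p)ˣ) : ZMod p)).val : ℂ))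
        / (p : ℂ))

/-- The Björck sequence of length `p` for a prime `p ≡ 1 (mod 4)`:
`u[k] = exp(iθχ(k))` with `θ = arccos (1/(1+√p))`. -/
def bjorck1 (p : ℕ) (k : ZMod p) : ℂ :=
  Complex.exp (Complex.I * (Real.arccos (1 / (1 + Real.sqrt p)) : ℂ) * chi p k)

/-- The Björck sequence of length `p` for a prime `p ≡ 3 (mod 4)`:
`u[k] = exp(iφ)` with `φ = arccos ((1-p)/(1+p))` if `k` is a quadratic nonresidue,
and `u[k] = 1` otherwise. -/
def bjorck3 (p : ℕ) (k : ZMod p) : ℂ :=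
  if ∀ m : ZMod p, m ^ 2 ≠ k then
    Complex.exp (Complex.I * (Real.arccos ((1 - (p : ℝ)) / (1 + (p : ℝ))) : ℂ))
  else 1

end

theorem jacobsthal (p : ℕ) [hp : Fact p.Prime] (hp2 : p ≠ 2)
    (a : ℤ) (ha : ¬ (p : ℤ) ∣ a) (F : ZMod p → ℂ) :
    ∑ x : (ZMod p)ˣ, F ((x : ZMod p) + (a : ZMod p) * ((x⁻¹ : (ZMod p)ˣ) : ZMod p)) =
      ∑ x : ZMod p, F x + ∑ x : ZMod p, chi p (x ^ 2 - 4 * (a : ZMod p)) * F x := by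
  classical
  have hchar : ringChar (ZMod p) ≠ 2 := (ZMod.ringChar_zmod_n p).substr hp2
  have ha' : (a : ZMod p) ≠ 0 := by
    simpa [ZMod.intCast_zmod_eq_zero_iff_dvd] using ha
  have h2 : (2 : ZMod p) ≠ 0 := Ring.two_ne_zero hchar
  set g : (ZMod p)ˣ → ZMod p :=
    fun x => (x : ZMod p) + (a : ZMod p) * ((x⁻¹ : (ZMod p)ˣ) : ZMod p) with hg
  have hchi : ∀ b : ZMod p, chi p b = ((quadraticChar (ZMod p) b : ℤ) : ℂ) := by
    intro b
    have hiff : (∃ m : ZMod p, m ^ 2 = b) ↔ IsSquare b := by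
      constructor
      · rintro ⟨m, hm⟩; exact ⟨m, by rw [← hm, sq]⟩
      · rintro ⟨r, hr⟩; exact ⟨r, by rw [sq, hr]⟩
    rw [quadraticChar_apply, quadraticCharFun]
    unfold chi
    by_cases hb : b = 0 <;> by_cases hs : IsSquare b <;> simp [hb, hs, hiff]
  have key : ∀ t : ZMod p,
      ((Finset.univ.filter (fun x : (ZMod p)ˣ => g x = t)).card : ℂ)
        = 1 + chi p (t ^ 2 - 4 * (a : ZMod p)) := by
    intro t
    have hbij : (Finset.univ.filter (fun x : (ZMod p)ˣ => g x = t)).card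
        = (Finset.univ.filter
            (fun y : ZMod p => y ^ 2 = t ^ 2 - 4 * (a : ZMod p))).card := by
      refine Finset.card_bij (fun x _ => 2 * (x : ZMod p) - t) ?_ ?_ ?_
      · intro x hx
        simp only [Finset.mem_filter, Finset.mem_univ, true_and] at hx ⊢
        have hxe : (x : ZMod p) + (a : ZMod p) * ((x : ZMod p))⁻¹ = t := by
          rw [← Units.val_inv_eq_inv_val]; exact hx
        have hx0 : (x : ZMod p) ≠ 0 := x.ne_zero
        have hq : (x : ZMod p) ^ 2 - t * (x : ZMod p) + (a : ZMod p) = 0 := by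
          have h := congrArg (· * (x : ZMod p)) hxe
          field_simp at h
          linear_combination h
        ring_nf
        linear_combination (4 : ZMod p) * hq
      · intro x _ y _ h
        have : (2 : ZMod p) * x = 2 * y := by linear_combination h
        exact Units.ext (mul_left_cancel₀ h2 this)
      · intro y hy
        simp only [Finset.mem_filter, Finset.mem_univ, true_and] at hy
        set x0 : ZMod p := (t + y) * 2⁻¹ with hx0def
        have hx0 : x0 ≠ 0 := by
          intro h
          have hprod : x0 * ((t - y) * 2⁻¹) = (a : ZMod p) := by
            rw [hx0def]
            field_simp
            linear_combination -hy
          rw [h, zero_mul] at hprod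
          exact ha' hprod.symm
        have hmem : g (Units.mk0 x0 hx0) = t := by
          show (Units.mk0 x0 hx0 : ZMod p) + (a : ZMod p) * _ = t
          have hty : t + y ≠ 0 := fun h => hx0 (by rw [hx0def, h, zero_mul])
          rw [Units.val_inv_eq_inv_val, Units.val_mk0, hx0def]
          field_simp
          linear_combination hy
        refine ⟨Units.mk0 x0 hx0, Finset.mem_filter.2 ⟨Finset.mem_univ _, hmem⟩, ?_⟩
        simp only [Units.val_mk0, hx0def]
        field_simp
        ring
    rw [hbij, hchi]
    have hcard := quadraticChar_card_sqrts hchar (t ^ 2 - 4 * (a : ZMod p))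
    rw [Set.toFinset_setOf] at hcard
    have h' : (((Finset.univ.filter
        (fun y : ZMod p => y ^ 2 = t ^ 2 - 4 * (a : ZMod p))).card : ℤ) : ℂ)
        = (((quadraticChar (ZMod p) (t ^ 2 - 4 * (a : ZMod p)) : ℤ) + 1 : ℤ) : ℂ) := by
      rw [hcard]
    push_cast at h' ⊢
    linear_combination h'
  calc ∑ x : (ZMod p)ˣ, F (g x)
      = ∑ t : ZMod p, ∑ x ∈ Finset.univ.filter (fun x : (ZMod p)ˣ => g x = t), F t :=
        (Finset.sum_fiberwise' Finset.univ g F).symm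
    _ = ∑ t : ZMod p, (1 + chi p (t ^ 2 - 4 * (a : ZMod p))) * F t := by
        refine Finset.sum_congr rfl fun t _ => ?_
        rw [Finset.sum_const, nsmul_eq_mul, key t]
    _ = ∑ x : ZMod p, F x + ∑ x : ZMod p, chi p (x ^ 2 - 4 * (a : ZMod p)) * F x := by
        rw [← Finset.sum_add_distrib]
        exact Finset.sum_congr rfl fun t _ => by ring
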